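/- Let D : ℂᵈ × ℂ → ℂ be analytic near the origin, and suppose D(ξ, λ) = Δ(ξ, λ) + O(|(ξ,λ)|^{n+2}) where Δ is a homogeneous polynomial of degree n+1 satisfying: for each unit vector ξ̂ ∈ S^{d−1}, the polynomial λ ↦ Δ(ξ̂, λ) has degree exactly n+1 (nonzero leading coefficient). Then for each ξ̂ ∈ S^{d−1} and all sufficiently small ρ > 0, the function λ̂ ↦ ρ^{−(n+1)} D(ρ ξ̂, ρ λ̂), restricted to a fixed large disk, has exactly n+1 zeros (counted with multiplicity), and as ρ → 0 these zeros converge to the n+1 roots of Δ(ξ̂, ·). -/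

import Mathlib

open Metric Polynomial

/-- Coordinates of a unit vector in Euclidean space are bounded by 1. -/
lemma aux_coord_le {d : ℕ} (x : EuclideanSpace ℝ (Fin d)) (i : Fin d) : |x i| ≤ ‖x‖ := by
  have h2 : |x i| = √(|x i| ^ 2) := by rw [Real.sqrt_sq_eq_abs, abs_abs]
  rw [EuclideanSpace.norm_eq x, h2]
  apply Real.sqrt_le_sqrt
  have h3 : |x i| ^ 2 = ‖x i‖ ^ 2 := by rw [Real.norm_eq_abs]
  rw [h3]
  exact Finset.single_le_sum (f := fun j => ‖x j‖ ^ 2) (fun j _ => by positivity)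
    (Finset.mem_univ i)

/-- Polynomial evaluation growth bound on a large disk. -/
lemma aux_poly_eval_bound (n : ℕ) (P : Polynomial ℂ) (hPd : P.natDegree ≤ n + 1)
    (S : ℝ) (hS : 1 ≤ S) (z : ℂ) (hz : ‖z‖ ≤ S) :
    ‖P.eval z‖ ≤ (∑ k ∈ Finset.range (n + 2), ‖P.coeff k‖) * S ^ (n + 1) := by
  have hev : P.eval z = ∑ k ∈ Finset.range (n + 2), P.coeff k * z ^ k := by
    rw [Polynomial.eval_eq_sum_range' (lt_of_le_of_lt hPd (Nat.lt_succ_self _))]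
  rw [hev, Finset.sum_mul]
  refine le_trans (norm_sum_le _ _) (Finset.sum_le_sum fun k hk => ?_)
  rw [norm_mul, norm_pow]
  refine mul_le_mul_of_nonneg_left ?_ (norm_nonneg _)
  calc ‖z‖ ^ k ≤ S ^ k := pow_le_pow_left₀ (norm_nonneg z) hz k
    _ ≤ S ^ (n + 1) := pow_le_pow_right₀ hS (Nat.lt_succ_iff.mp (Finset.mem_range.1 hk))

/-- Factoring out finitely many zeros of a holomorphic function on a disk. -/
lemma aux_factor_zeros (S : ℝ) (g : ℂ → ℂ)
    (hg : DifferentiableOn ℂ g (ball 0 S)) (hgc : ContinuousOn g (closedBall 0 S))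
    (k : ℕ) (w : Fin k → ℂ) (hw : Function.Injective w)
    (hwS : ∀ i, w i ∈ ball (0:ℂ) S) (hz : ∀ i, g (w i) = 0) :
    ∃ h : ℂ → ℂ, DifferentiableOn ℂ h (ball 0 S) ∧ ContinuousOn h (closedBall 0 S) ∧
      ∀ z ∈ closedBall (0:ℂ) S, g z = (∏ i, (z - w i)) * h z := by
  induction k generalizing g with
  | zero =>
    exact ⟨g, hg, hgc, fun z _ => by simp⟩
  | succ k ih =>
    obtain ⟨h, hd, hc, heq⟩ := ih g hg hgc (w ∘ Fin.castSucc)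
      (hw.comp (Fin.castSucc_injective k)) (fun i => hwS _) (fun i => hz _)
    have hwl : w (Fin.last k) ∈ ball (0:ℂ) S := hwS _
    have hwlc : w (Fin.last k) ∈ closedBall (0:ℂ) S := ball_subset_closedBall hwl
    have hlast : h (w (Fin.last k)) = 0 := by
      have h0 := heq (w (Fin.last k)) hwlc
      rw [hz (Fin.last k)] at h0
      have hne : (∏ i : Fin k, (w (Fin.last k) - w (Fin.castSucc i))) ≠ 0 := by
        apply Finset.prod_ne_zero_iff.2
        intro i _
        exact sub_ne_zero.2 fun hcon => (Fin.castSucc_lt_last i).ne' (hw hcon)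
      rcases mul_eq_zero.1 h0.symm with h' | h'
      · exact absurd h' hne
      · exact h'
    refine ⟨dslope h (w (Fin.last k)), ?_, ?_, ?_⟩
    · exact (Complex.differentiableOn_dslope (isOpen_ball.mem_nhds hwl)).2 hd
    · exact (continuousOn_dslope (closedBall_mem_nhds_of_mem hwl)).2
        ⟨hc, hd.differentiableAt (isOpen_ball.mem_nhds hwl)⟩
    · intro z hzS
      have key : (z - w (Fin.last k)) * dslope h (w (Fin.last k)) z = h z := by
        have hs := sub_smul_dslope h (w (Fin.last k)) z
        rw [smul_eq_mul] at hs
        rw [hs, hlast, sub_zero]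
      rw [heq z hzS, Fin.prod_univ_castSucc, ← key]
      simp only [Function.comp]
      ring

/-- Quantitative counting lemma: a function uniformly close to a polynomial of
degree at most `n+1` on a large disk cannot have `n+2` distinct zeros in a
fixed smaller disk. -/
lemma aux_count_lemma (n : ℕ) (P : Polynomial ℂ) (hPd : P.natDegree ≤ n + 1)
    (R m₂ : ℝ) (hR : 1 ≤ R) (hm₂ : 0 < m₂)
    (hsphere : ∀ z : ℂ, ‖z‖ = R → m₂ ≤ ‖P.eval z‖) :
    ∃ S η₀ : ℝ, 2 * R ≤ S ∧ 0 < η₀ ∧ ∀ (g : ℂ → ℂ) (η : ℝ), 0 ≤ η → η ≤ η₀ →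
      DifferentiableOn ℂ g (ball 0 S) → ContinuousOn g (closedBall 0 S) →
      (∀ z ∈ closedBall (0:ℂ) S, ‖g z - P.eval z‖ ≤ η) →
      ∀ w : Fin (n + 2) → ℂ, Function.Injective w → (∀ i, ‖w i‖ ≤ R) →
        ∃ i, g (w i) ≠ 0 := by
  set A : ℝ := ∑ k ∈ Finset.range (n + 2), ‖P.coeff k‖ with hA
  have hA0 : 0 ≤ A := Finset.sum_nonneg fun _ _ => norm_nonneg _
  set S : ℝ := max (2 * R) ((2 * R) ^ (n + 2) * (A + 1) * 2 ^ (n + 2) * 4 / m₂) with hSdef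
  have hS2R : 2 * R ≤ S := le_max_left _ _
  have hS1 : 1 ≤ S := le_trans (by linarith) hS2R
  have hS0 : 0 < S := lt_of_lt_of_le one_pos hS1
  have hSbig : (2 * R) ^ (n + 2) * (A + 1) * 2 ^ (n + 2) * 4 / m₂ ≤ S := le_max_right _ _
  refine ⟨S, min 1 (m₂ / 4), hS2R, lt_min one_pos (by linarith), ?_⟩
  intro g η hη0 hηle hgd hgc hgP w hwinj hwR
  by_contra hcon
  push_neg at hcon
  have hη1 : η ≤ 1 := le_trans hηle (min_le_left _ _)
  have hηm : η ≤ m₂ / 4 := le_trans hηle (min_le_right _ _)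
  have hRS : R < S := lt_of_lt_of_le (by linarith) hS2R
  have hwball : ∀ i, w i ∈ ball (0:ℂ) S := fun i => by
    rw [mem_ball_zero_iff]; exact lt_of_le_of_lt (hwR i) hRS
  obtain ⟨h, hhd, hhc, hfac⟩ := aux_factor_zeros S g hgd hgc (n + 2) w hwinj hwball hcon
  set B : ℝ := (A + 1) * 2 ^ (n + 2) / S with hB
  have hsphereBound : ∀ z ∈ frontier (ball (0:ℂ) S), ‖h z‖ ≤ B := by
    intro z hzf
    rw [frontier_ball _ (ne_of_gt hS0), mem_sphere_zero_iff_norm] at hzf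
    have hzc : z ∈ closedBall (0:ℂ) S := by
      rw [mem_closedBall_zero_iff, hzf]
    have hgz : ‖g z‖ ≤ (A + 1) * S ^ (n + 1) := by
      have h1 : ‖g z - P.eval z‖ ≤ η := hgP z hzc
      have h2 : ‖P.eval z‖ ≤ A * S ^ (n + 1) :=
        aux_poly_eval_bound n P hPd S hS1 z (le_of_eq hzf)
      have h3 : (1:ℝ) ≤ S ^ (n + 1) := one_le_pow₀ hS1
      calc ‖g z‖ = ‖(g z - P.eval z) + P.eval z‖ := by ring_nf
        _ ≤ ‖g z - P.eval z‖ + ‖P.eval z‖ := norm_add_le _ _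
        _ ≤ η + A * S ^ (n + 1) := add_le_add h1 h2
        _ ≤ 1 * S ^ (n + 1) + A * S ^ (n + 1) := by nlinarith
        _ = (A + 1) * S ^ (n + 1) := by ring
    have hprodlb : (S / 2) ^ (n + 2) ≤ ∏ i : Fin (n + 2), ‖z - w i‖ := by
      calc (S / 2) ^ (n + 2) = ∏ _i : Fin (n + 2), (S / 2) := by
            rw [Finset.prod_const, Finset.card_univ, Fintype.card_fin]
        _ ≤ ∏ i : Fin (n + 2), ‖z - w i‖ := by
            refine Finset.prod_le_prod (fun _ _ => by positivity) (fun i _ => ?_)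
            have h5 := norm_sub_norm_le z (w i)
            have h6 := hwR i
            rw [hzf] at h5
            linarith
    have hfz := hfac z hzc
    have hgznorm : ‖g z‖ = (∏ i : Fin (n + 2), ‖z - w i‖) * ‖h z‖ := by
      rw [hfz, norm_mul, norm_prod]
    have hkey : (S / 2) ^ (n + 2) * ‖h z‖ ≤ (A + 1) * S ^ (n + 1) := by
      calc (S / 2) ^ (n + 2) * ‖h z‖ ≤ (∏ i : Fin (n + 2), ‖z - w i‖) * ‖h z‖ :=
            mul_le_mul_of_nonneg_right hprodlb (norm_nonneg _)
        _ = ‖g z‖ := hgznorm.symm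
        _ ≤ (A + 1) * S ^ (n + 1) := hgz
    have hSp : (0:ℝ) < (S / 2) ^ (n + 2) := by positivity
    rw [hB, div_eq_mul_inv]
    have h7 : ‖h z‖ ≤ (A + 1) * S ^ (n + 1) / (S / 2) ^ (n + 2) :=
      (le_div_iff₀ hSp).2 (by linarith [hkey])
    refine le_trans h7 (le_of_eq ?_)
    rw [div_pow, pow_succ S (n + 1)]
    field_simp
  have hB0 : 0 ≤ B := by positivity
  have hmax : ∀ z ∈ closedBall (0:ℂ) S, ‖h z‖ ≤ B := by
    intro z hzc
    have hcl : z ∈ closure (ball (0:ℂ) S) := by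
      rwa [closure_ball _ (ne_of_gt hS0)]
    exact Complex.norm_le_of_forall_mem_frontier_norm_le isBounded_ball
      ⟨hhd, by rwa [closure_ball _ (ne_of_gt hS0)]⟩ hsphereBound hcl
  set zs : ℂ := (R : ℂ) with hzs
  have hzsn : ‖zs‖ = R := by
    rw [hzs, Complex.norm_real, Real.norm_eq_abs, abs_of_pos (by linarith)]
  have hzsc : zs ∈ closedBall (0:ℂ) S := by
    rw [mem_closedBall_zero_iff, hzsn]; linarith
  have hprodub : ∏ i : Fin (n + 2), ‖zs - w i‖ ≤ (2 * R) ^ (n + 2) := by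
    calc ∏ i : Fin (n + 2), ‖zs - w i‖ ≤ ∏ _i : Fin (n + 2), (2 * R) := by
          refine Finset.prod_le_prod (fun _ _ => norm_nonneg _) (fun i _ => ?_)
          calc ‖zs - w i‖ ≤ ‖zs‖ + ‖w i‖ := norm_sub_le _ _
            _ ≤ R + R := by rw [hzsn]; linarith [hwR i]
            _ = 2 * R := by ring
      _ = (2 * R) ^ (n + 2) := by
          rw [Finset.prod_const, Finset.card_univ, Fintype.card_fin]
  have hm2le : m₂ ≤ (2 * R) ^ (n + 2) * B + η := by
    have h1 : m₂ ≤ ‖P.eval zs‖ := hsphere zs hzsn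
    have h2 : ‖P.eval zs‖ ≤ ‖g zs‖ + η := by
      have h8 := hgP zs hzsc
      calc ‖P.eval zs‖ = ‖g zs - (g zs - P.eval zs)‖ := by ring_nf
        _ ≤ ‖g zs‖ + ‖g zs - P.eval zs‖ := norm_sub_le _ _
        _ ≤ ‖g zs‖ + η := by linarith
    have h3 : ‖g zs‖ ≤ (2 * R) ^ (n + 2) * B := by
      rw [hfac zs hzsc, norm_mul, norm_prod]
      exact mul_le_mul hprodub (hmax zs hzsc) (norm_nonneg _) (by positivity)
    linarith
  have hfin : (2 * R) ^ (n + 2) * B ≤ m₂ / 2 := by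
    rw [hB]
    have h4 : (2 * R) ^ (n + 2) * (A + 1) * 2 ^ (n + 2) * 4 ≤ m₂ * S := by
      rw [div_le_iff₀ hm₂] at hSbig; linarith
    have he : (2 * R) ^ (n + 2) * ((A + 1) * 2 ^ (n + 2) / S)
        = ((2 * R) ^ (n + 2) * (A + 1) * 2 ^ (n + 2)) / S := by ring
    rw [he, div_le_iff₀ hS0]
    nlinarith [pow_pos (show (0:ℝ) < 2 * R by linarith) (n + 2)]
  linarith

/-- Minimum modulus principle: a function holomorphic on a disk whose modulus
is larger on the boundary than at the center must vanish somewhere. -/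
lemma aux_exists_zero (g : ℂ → ℂ) (w₀ : ℂ) (δ : ℝ) (hδ : 0 < δ)
    (hd : DifferentiableOn ℂ g (ball w₀ δ)) (hc : ContinuousOn g (closedBall w₀ δ))
    (c : ℝ) (hc0 : 0 < c) (hbd : ∀ z ∈ sphere w₀ δ, c ≤ ‖g z‖) (hcen : ‖g w₀‖ < c) :
    ∃ z ∈ closedBall w₀ δ, g z = 0 := by
  by_contra hcon
  push_neg at hcon
  have hne : ∀ z ∈ closedBall w₀ δ, g z ≠ 0 := hcon
  set f : ℂ → ℂ := fun z => (g z)⁻¹ with hf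
  have hfd : DiffContOnCl ℂ f (ball w₀ δ) := by
    constructor
    · exact hd.inv fun z hz => hne z (ball_subset_closedBall hz)
    · rw [closure_ball _ (ne_of_gt hδ)]
      exact hc.inv₀ hne
  have hfr : ∀ z ∈ frontier (ball w₀ δ), ‖f z‖ ≤ c⁻¹ := by
    intro z hz
    rw [frontier_ball _ (ne_of_gt hδ)] at hz
    rw [hf]
    simp only [norm_inv]
    exact inv_anti₀ hc0 (hbd z hz)
  have hw₀ : w₀ ∈ closure (ball w₀ δ) := by
    rw [closure_ball _ (ne_of_gt hδ)]
    exact mem_closedBall_self (le_of_lt hδ)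
  have hg0 : 0 < ‖g w₀‖ := norm_pos_iff.2 (hne w₀ (mem_closedBall_self (le_of_lt hδ)))
  have h1 := Complex.norm_le_of_forall_mem_frontier_norm_le isBounded_ball hfd hfr hw₀
  rw [hf] at h1
  simp only [norm_inv] at h1
  linarith [inv_strictAnti₀ hg0 hcen]

/-- Localization: points where `P` is small are close to roots of `P`. -/
lemma aux_loc_lemma (P : Polynomial ℂ) (R ε : ℝ) (hε : 0 < ε) :
    ∃ m₁ : ℝ, 0 < m₁ ∧ ∀ z : ℂ, ‖z‖ ≤ R → ‖P.eval z‖ < m₁ →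
      ∃ w : ℂ, P.eval w = 0 ∧ dist z w < ε := by
  set K : Set ℂ := {z | ‖z‖ ≤ R ∧ ∀ w : ℂ, P.eval w = 0 → ε ≤ dist z w} with hK
  have hKc : IsCompact K := by
    apply Metric.isCompact_of_isClosed_isBounded
    · have hKeq : K = {z : ℂ | ‖z‖ ≤ R} ∩
          ⋂ w ∈ {w : ℂ | P.eval w = 0}, {z : ℂ | ε ≤ dist z w} := by
        ext z
        simp [hK, Set.mem_iInter]
      rw [hKeq]
      refine IsClosed.inter (isClosed_le (by fun_prop) continuous_const) ?_
      exact isClosed_biInter fun w _ => isClosed_le continuous_const (by fun_prop)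
    · exact (Metric.isBounded_closedBall (x := (0:ℂ)) (r := R)).subset
        fun z hz => mem_closedBall_zero_iff.2 hz.1
  rcases K.eq_empty_or_nonempty with hKe | hKne
  · refine ⟨1, one_pos, fun z hz _ => ?_⟩
    by_contra hcon
    push_neg at hcon
    have hzK : z ∈ K := ⟨hz, fun w hw => hcon w hw⟩
    rw [hKe] at hzK
    exact hzK
  · obtain ⟨x, hxK, hxmin⟩ := hKc.exists_isMinOn hKne
      (Polynomial.continuous P).norm.continuousOn
    refine ⟨‖P.eval x‖, ?_, fun z hz hlt => ?_⟩
    · rw [norm_pos_iff]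
      intro h0
      have h9 := hxK.2 x h0
      simp at h9
      linarith
    · by_contra hcon
      push_neg at hcon
      have hzK : z ∈ K := ⟨hz, fun w hw => hcon w hw⟩
      exact absurd (hxmin hzK) (not_le.2 hlt)

/-- Positive minimum of `‖P‖` on a root-free sphere. -/
lemma aux_sphere_min (P : Polynomial ℂ) (c : ℂ) (r : ℝ) (hr : 0 < r)
    (hnoroot : ∀ z ∈ sphere c r, P.eval z ≠ 0) :
    ∃ m : ℝ, 0 < m ∧ ∀ z ∈ sphere c r, m ≤ ‖P.eval z‖ := by
  have hne : (sphere c r).Nonempty := NormedSpace.sphere_nonempty.2 (le_of_lt hr)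
  obtain ⟨x, hx, hxmin⟩ := (isCompact_sphere c r).exists_isMinOn hne
    (Polynomial.continuous P).norm.continuousOn
  exact ⟨‖P.eval x‖, norm_pos_iff.2 (hnoroot x hx), fun z hz => hxmin hz⟩

/-- A radius around a root of `P` avoiding all other roots. -/
lemma aux_delta_choice (P : Polynomial ℂ) (hP : P ≠ 0) (w₀ : ℂ) (ε : ℝ) (hε : 0 < ε) :
    ∃ δ : ℝ, 0 < δ ∧ δ ≤ ε ∧ δ ≤ 1 ∧ ∀ w : ℂ, P.eval w = 0 → w ≠ w₀ → δ < dist w₀ w := by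
  have hfin : {w : ℂ | P.IsRoot w ∧ w ≠ w₀}.Finite :=
    (Polynomial.finite_setOf_isRoot hP).subset fun w hw => hw.1
  rcases eq_or_ne hfin.toFinset ∅ with hT | hT
  · refine ⟨min ε 1, lt_min hε one_pos, min_le_left _ _, min_le_right _ _, fun w hw hne => ?_⟩
    exfalso
    have hmem : w ∈ hfin.toFinset := hfin.mem_toFinset.2 ⟨hw, hne⟩
    rw [hT] at hmem
    exact absurd hmem (Finset.notMem_empty w)
  · have hTne : hfin.toFinset.Nonempty := Finset.nonempty_of_ne_empty hT
    set d₀ : ℝ := hfin.toFinset.inf' hTne (fun w => dist w₀ w) with hd₀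
    have hd₀pos : 0 < d₀ := by
      rw [hd₀, Finset.lt_inf'_iff]
      intro w hw
      exact dist_pos.2 (Ne.symm (hfin.mem_toFinset.1 hw).2)
    refine ⟨min (min ε 1) (d₀ / 2), lt_min (lt_min hε one_pos) (by linarith),
      le_trans (min_le_left _ _) (min_le_left _ _),
      le_trans (min_le_left _ _) (min_le_right _ _), fun w hw hne => ?_⟩
    have h1 : d₀ ≤ dist w₀ w := Finset.inf'_le _ (hfin.mem_toFinset.2 ⟨hw, hne⟩)
    calc min (min ε 1) (d₀ / 2) ≤ d₀ / 2 := min_le_right _ _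
      _ < d₀ := by linarith
      _ ≤ dist w₀ w := h1
/-- Rouché/Hurwitz argument: if `D = Δ + O(|(ξ,λ)|^{n+2})` near the origin,
with `Δ` homogeneous of degree `n+1` and of exact degree `n+1` in `λ` in each
unit direction `ξ̂`, then for each `ξ̂` and small `ρ > 0`, the zeros of
`λ̂ ↦ D(ρξ̂, ρλ̂)` in a fixed large disk number `n+1` and converge, as
`ρ → 0`, to the roots of `Δ(ξ̂, ·)`. -/
theorem stmt_11 (d n : ℕ) (D : (Fin d → ℂ) × ℂ → ℂ)
    (Δ : (Fin d → ℂ) → ℂ → ℂ)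
    (hD : AnalyticAt ℂ D 0)
    (hhom : ∀ (t : ℂ) (ξ : Fin d → ℂ) (l : ℂ),
      Δ (t • ξ) (t * l) = t ^ (n + 1) * Δ ξ l)
    (hO : ∃ C r : ℝ, 0 < C ∧ 0 < r ∧ ∀ p : (Fin d → ℂ) × ℂ,
      ‖p‖ ≤ r → ‖D p - Δ p.1 p.2‖ ≤ C * ‖p‖ ^ (n + 2))
    (hdeg : ∀ ξh : EuclideanSpace ℝ (Fin d), ‖ξh‖ = 1 →
      ∃ P : Polynomial ℂ, P.degree = (n + 1 : ℕ) ∧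
        ∀ l : ℂ, P.eval l = Δ (fun i => (ξh i : ℂ)) l) :
    ∀ ξh : EuclideanSpace ℝ (Fin d), ‖ξh‖ = 1 →
      ∃ R : ℝ, 0 < R ∧
        (∀ l : ℂ, Δ (fun i => (ξh i : ℂ)) l = 0 → ‖l‖ < R) ∧
        ∀ ε : ℝ, 0 < ε → ∃ ρ₀ : ℝ, 0 < ρ₀ ∧ ∀ ρ : ℝ, 0 < ρ → ρ < ρ₀ →
          ∃ z : Fin (n + 1) → ℂ,
            (∀ i, ‖z i‖ ≤ R ∧
              D (fun j => ((ρ * ξh j : ℝ) : ℂ), (ρ : ℂ) * z i) = 0 ∧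
              ∃ w : ℂ, Δ (fun i => (ξh i : ℂ)) w = 0 ∧ dist (z i) w < ε) ∧
            (∀ w : ℂ, ‖w‖ ≤ R →
              D (fun j => ((ρ * ξh j : ℝ) : ℂ), (ρ : ℂ) * w) = 0 →
              ∃ i, z i = w) := by
  intro ξh hξ
  obtain ⟨P, hPdeg, hPeval⟩ := hdeg ξh hξ
  set ξℂ : Fin d → ℂ := fun i => (ξh i : ℂ) with hξℂ
  have hξℂnorm : ‖ξℂ‖ ≤ 1 := by
    refine (pi_norm_le_iff_of_nonneg zero_le_one).2 fun i => ?_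
    rw [hξℂ]
    simp only [Complex.norm_real, Real.norm_eq_abs]
    rw [← hξ]
    exact aux_coord_le ξh i
  have hPnat : P.natDegree = n + 1 := natDegree_eq_of_degree_eq_some hPdeg
  have hPne : P ≠ 0 := by
    intro h0
    rw [h0, Polynomial.natDegree_zero] at hPnat
    exact Nat.succ_ne_zero n hPnat.symm
  -- bound on roots
  have hrootfin : ((fun w => ‖w‖) '' {w : ℂ | P.IsRoot w}).Finite :=
    (Polynomial.finite_setOf_isRoot hPne).image _
  obtain ⟨M0, hM0⟩ := hrootfin.bddAbove
  set M : ℝ := max M0 0 with hM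
  have hMroot : ∀ w : ℂ, P.eval w = 0 → ‖w‖ ≤ M := fun w hw =>
    le_trans (hM0 ⟨w, hw, rfl⟩) (le_max_left _ _)
  have hM0' : 0 ≤ M := le_max_right _ _
  set R : ℝ := M + 2 with hR
  have hR1 : 1 ≤ R := by rw [hR]; linarith
  have hR0 : 0 < R := by linarith
  refine ⟨R, hR0, fun l hl => ?_, ?_⟩
  · have : P.eval l = 0 := by rw [hPeval]; exact hl
    have := hMroot l this
    rw [hR]; linarith
  intro ε hε
  -- minimum of ‖P‖ on the sphere of radius R
  have hnorootR : ∀ z ∈ sphere (0:ℂ) R, P.eval z ≠ 0 := by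
    intro z hz h0
    rw [mem_sphere_zero_iff_norm] at hz
    have := hMroot z h0
    rw [hz] at this; linarith
  obtain ⟨m₂, hm₂, hm₂b⟩ := aux_sphere_min P 0 R hR0 hnorootR
  obtain ⟨S, η₀, hS2R, hη₀, hcount⟩ := aux_count_lemma n P (le_of_eq hPnat) R m₂ hR1 hm₂
    (fun z hz => hm₂b z (mem_sphere_zero_iff_norm.2 hz))
  have hS1 : 1 ≤ S := le_trans (by linarith) hS2R
  have hS0 : 0 < S := lt_of_lt_of_le one_pos hS1
  have hRS : R ≤ S := le_trans (by linarith) hS2R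
  -- localization constant
  obtain ⟨m₁, hm₁, hm₁b⟩ := aux_loc_lemma P R ε hε
  -- a root of P and an isolating radius
  obtain ⟨w₀, hw₀⟩ := Complex.exists_root (by rw [hPdeg]; exact_mod_cast Nat.succ_pos n)
  obtain ⟨δ, hδ0, hδε, hδ1, hδroot⟩ := aux_delta_choice P hPne w₀ ε hε
  have hnorootδ : ∀ z ∈ sphere w₀ δ, P.eval z ≠ 0 := by
    intro z hz h0
    rw [mem_sphere] at hz
    rcases eq_or_ne z w₀ with h' | h'
    · rw [h'] at hz; simp at hz; linarith
    · have := hδroot z h0 h'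
      rw [dist_comm] at hz
      rw [hz] at this
      exact absurd this (lt_irrefl δ)
  obtain ⟨m₀, hm₀, hm₀b⟩ := aux_sphere_min P w₀ δ hδ0 hnorootδ
  -- analyticity radius
  obtain ⟨r₁, hr₁0, hr₁⟩ : ∃ r₁ > 0, ∀ p : (Fin d → ℂ) × ℂ, ‖p‖ < r₁ → AnalyticAt ℂ D p := by
    have := hD.eventually_analyticAt
    rw [Metric.eventually_nhds_iff] at this
    obtain ⟨r₁, hr₁0, hr₁⟩ := this
    exact ⟨r₁, hr₁0, fun p hp => hr₁ (by rwa [dist_zero_right])⟩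
  obtain ⟨C, r, hC, hr, hOb⟩ := hO
  set ηt : ℝ := min (min (m₁ / 2) (m₀ / 4)) (min η₀ 1) with hηt
  have hηt0 : 0 < ηt := lt_min (lt_min (by linarith) (by linarith)) (lt_min hη₀ one_pos)
  have hηtm₁ : ηt ≤ m₁ / 2 := le_trans (min_le_left _ _) (min_le_left _ _)
  have hηtm₀ : ηt ≤ m₀ / 4 := le_trans (min_le_left _ _) (min_le_right _ _)
  have hηtη₀ : ηt ≤ η₀ := le_trans (min_le_right _ _) (min_le_left _ _)
  set ρ₀ : ℝ := min (min r (r₁ / 2) / (S + 1)) (ηt / (C * (S + 1) ^ (n + 2))) with hρ₀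
  have hρ₀0 : 0 < ρ₀ := by
    apply lt_min
    · apply div_pos (lt_min hr (by linarith)) (by linarith)
    · apply div_pos hηt0 (by positivity)
  refine ⟨ρ₀, hρ₀0, ?_⟩
  intro ρ hρ hρlt
  have hρℂ : ((ρ:ℂ)) ^ (n + 1) ≠ 0 := pow_ne_zero _ (Complex.ofReal_ne_zero.2 (ne_of_gt hρ))
  -- the rescaled function
  set g : ℂ → ℂ := fun z =>
    D ((fun j => ((ρ * ξh j : ℝ) : ℂ)), (ρ : ℂ) * z) / (ρ : ℂ) ^ (n + 1) with hg
  have hq1 : (fun j => ((ρ * ξh j : ℝ) : ℂ)) = (ρ : ℂ) • ξℂ := by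
    funext j
    rw [hξℂ]
    simp only [Pi.smul_apply, smul_eq_mul]
    push_cast
    ring
  have hqnorm : ∀ z : ℂ, ‖z‖ ≤ S →
      ‖((fun j => ((ρ * ξh j : ℝ) : ℂ)), (ρ : ℂ) * z)‖ ≤ ρ * (S + 1) := by
    intro z hz
    rw [Prod.norm_def]
    apply max_le
    · rw [hq1, norm_smul, Complex.norm_real, Real.norm_eq_abs, abs_of_pos hρ]
      nlinarith [norm_nonneg ξℂ]
    · rw [norm_mul, Complex.norm_real, Real.norm_eq_abs, abs_of_pos hρ]
      nlinarith
  have hρS : ρ * (S + 1) ≤ min r (r₁ / 2) := by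
    have h1 : ρ ≤ min r (r₁ / 2) / (S + 1) := le_trans (le_of_lt hρlt) (min_le_left _ _)
    rw [le_div_iff₀ (by linarith : (0:ℝ) < S + 1)] at h1
    linarith
  have hqr : ∀ z : ℂ, ‖z‖ ≤ S →
      ‖((fun j => ((ρ * ξh j : ℝ) : ℂ)), (ρ : ℂ) * z)‖ ≤ r :=
    fun z hz => le_trans (hqnorm z hz) (le_trans hρS (min_le_left _ _))
  have hqr₁ : ∀ z : ℂ, ‖z‖ ≤ S →
      ‖((fun j => ((ρ * ξh j : ℝ) : ℂ)), (ρ : ℂ) * z)‖ < r₁ := by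
    intro z hz
    have := le_trans (hqnorm z hz) (le_trans hρS (min_le_right _ _))
    linarith
  -- differentiability of g
  have hgdAt : ∀ z : ℂ, ‖z‖ ≤ S → DifferentiableAt ℂ g z := by
    intro z hz
    rw [hg]
    apply DifferentiableAt.div_const
    have hinner : DifferentiableAt ℂ
        (fun z : ℂ => (((fun j => ((ρ * ξh j : ℝ) : ℂ)) : Fin d → ℂ), (ρ : ℂ) * z)) z :=
      (differentiableAt_const _).prodMk (differentiableAt_id.const_mul _)
    exact ((hr₁ _ (hqr₁ z hz)).differentiableAt.comp z hinner)
  have hgd : DifferentiableOn ℂ g (ball 0 S) := fun z hz =>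
    (hgdAt z (le_of_lt (mem_ball_zero_iff.1 hz))).differentiableWithinAt
  have hgc : ContinuousOn g (closedBall 0 S) := fun z hz =>
    (hgdAt z (mem_closedBall_zero_iff.1 hz)).continuousAt.continuousWithinAt
  -- g is uniformly close to P on the disk of radius S
  have hgP : ∀ z ∈ closedBall (0:ℂ) S, ‖g z - P.eval z‖ ≤ ηt := by
    intro z hz
    rw [mem_closedBall_zero_iff] at hz
    have hΔ : Δ (fun j => ((ρ * ξh j : ℝ) : ℂ)) ((ρ : ℂ) * z)
        = (ρ : ℂ) ^ (n + 1) * P.eval z := by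
      rw [hq1, hhom, hPeval]
    have hgdiff : g z - P.eval z
        = (D ((fun j => ((ρ * ξh j : ℝ) : ℂ)), (ρ : ℂ) * z)
            - Δ (fun j => ((ρ * ξh j : ℝ) : ℂ)) ((ρ : ℂ) * z)) / (ρ : ℂ) ^ (n + 1) := by
      rw [hg, hΔ]
      field_simp
    have hnum := hOb ((fun j => ((ρ * ξh j : ℝ) : ℂ)), (ρ : ℂ) * z) (hqr z hz)
    rw [hgdiff, norm_div, norm_pow, Complex.norm_real, Real.norm_eq_abs, abs_of_pos hρ]
    have hρn1 : (0:ℝ) < ρ ^ (n + 1) := pow_pos hρ _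
    rw [div_le_iff₀ hρn1]
    have hbound : ‖((fun j => ((ρ * ξh j : ℝ) : ℂ)), (ρ : ℂ) * z)‖ ^ (n + 2)
        ≤ (ρ * (S + 1)) ^ (n + 2) :=
      pow_le_pow_left₀ (norm_nonneg _) (hqnorm z hz) _
    have hρηt : C * ρ * (S + 1) ^ (n + 2) ≤ ηt := by
      have h1 : ρ ≤ ηt / (C * (S + 1) ^ (n + 2)) :=
        le_trans (le_of_lt hρlt) (min_le_right _ _)
      rw [le_div_iff₀ (by positivity : (0:ℝ) < C * (S + 1) ^ (n + 2))] at h1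
      linarith
    calc ‖D ((fun j => ((ρ * ξh j : ℝ) : ℂ)), (ρ : ℂ) * z)
            - Δ (fun j => ((ρ * ξh j : ℝ) : ℂ)) ((ρ : ℂ) * z)‖
        ≤ C * ‖((fun j => ((ρ * ξh j : ℝ) : ℂ)), (ρ : ℂ) * z)‖ ^ (n + 2) := hnum
      _ ≤ C * (ρ * (S + 1)) ^ (n + 2) := by
          exact mul_le_mul_of_nonneg_left hbound (le_of_lt hC)
      _ = (C * ρ * (S + 1) ^ (n + 2)) * ρ ^ (n + 1) := by rw [mul_pow]; ring
      _ ≤ ηt * ρ ^ (n + 1) := mul_le_mul_of_nonneg_right hρηt (le_of_lt hρn1)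
  -- zeros of g exactly correspond to zeros of D
  have hgzero : ∀ z : ℂ, g z = 0 ↔
      D ((fun j => ((ρ * ξh j : ℝ) : ℂ)), (ρ : ℂ) * z) = 0 := by
    intro z
    show D ((fun j => ((ρ * ξh j : ℝ) : ℂ)), (ρ : ℂ) * z) / (ρ : ℂ) ^ (n + 1) = 0 ↔ _
    rw [_root_.div_eq_zero_iff]
    exact or_iff_left hρℂ
  -- existence of a zero near w₀
  have hw₀M : ‖w₀‖ ≤ M := hMroot w₀ hw₀
  have hδsub : closedBall w₀ δ ⊆ closedBall (0:ℂ) S := by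
    intro y hy
    rw [mem_closedBall] at hy
    rw [mem_closedBall_zero_iff]
    calc ‖y‖ = ‖y - w₀ + w₀‖ := by ring_nf
      _ ≤ ‖y - w₀‖ + ‖w₀‖ := norm_add_le _ _
      _ ≤ δ + M := add_le_add (by rwa [← dist_eq_norm]) hw₀M
      _ ≤ S := by linarith
  obtain ⟨z₀, hz₀mem, hz₀⟩ := aux_exists_zero g w₀ δ hδ0
    (fun y hy => (hgdAt y (mem_closedBall_zero_iff.1
      (hδsub (ball_subset_closedBall hy)))).differentiableWithinAt)
    (fun y hy => (hgdAt y (mem_closedBall_zero_iff.1 (hδsub hy))).continuousAt.continuousWithinAt)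
    (m₀ / 2) (by linarith)
    (by
      intro y hy
      have hyc : y ∈ closedBall (0:ℂ) S := hδsub (sphere_subset_closedBall hy)
      have h1 := hgP y hyc
      have h2 := hm₀b y hy
      calc m₀ / 2 ≤ ‖P.eval y‖ - ηt := by linarith
        _ ≤ ‖P.eval y‖ - ‖g y - P.eval y‖ := by linarith
        _ ≤ ‖g y‖ := by
            have := norm_sub_norm_le (g y) (P.eval y)
            have h3 : ‖P.eval y‖ - ‖g y‖ ≤ ‖g y - P.eval y‖ := by
              rw [norm_sub_rev] at this ⊢
              linarith [abs_norm_sub_norm_le (P.eval y) (g y), le_abs_self (‖P.eval y‖ - ‖g y‖)]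
            linarith)
    (by
      have hw₀c : w₀ ∈ closedBall (0:ℂ) S := hδsub (mem_closedBall_self (le_of_lt hδ0))
      have h1 := hgP w₀ hw₀c
      have h2 : P.eval w₀ = 0 := hw₀
      rw [h2, sub_zero] at h1
      linarith)
  have hz₀R : ‖z₀‖ ≤ R := by
    rw [mem_closedBall] at hz₀mem
    calc ‖z₀‖ = ‖z₀ - w₀ + w₀‖ := by ring_nf
      _ ≤ ‖z₀ - w₀‖ + ‖w₀‖ := norm_add_le _ _
      _ ≤ δ + M := add_le_add (by rwa [← dist_eq_norm]) hw₀M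
      _ ≤ R := by rw [hR]; linarith
  -- the zero set in the disk of radius R
  set Z : Set ℂ := {z : ℂ | ‖z‖ ≤ R ∧ g z = 0} with hZ
  have hz₀Z : z₀ ∈ Z := ⟨hz₀R, hz₀⟩
  have hnoT : ∀ T : Finset ℂ, ↑T ⊆ Z → T.card ≠ n + 2 := by
    intro T hT hTc
    set w : Fin (n + 2) → ℂ := fun i => (T.equivFin.symm (Fin.cast hTc.symm i) : ℂ) with hw
    have hwinj : Function.Injective w := by
      intro i j hij
      have h1 : T.equivFin.symm (Fin.cast hTc.symm i) = T.equivFin.symm (Fin.cast hTc.symm j) :=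
        Subtype.ext hij
      have h2 := T.equivFin.symm.injective h1
      exact Fin.cast_injective _ h2
    have hwZ : ∀ i, w i ∈ Z := fun i => hT (T.equivFin.symm (Fin.cast hTc.symm i)).2
    obtain ⟨i, hi⟩ := hcount g ηt (le_of_lt hηt0) hηtη₀ hgd hgc hgP w hwinj
      (fun i => (hwZ i).1)
    exact hi (hwZ i).2
  have hZfin : Z.Finite := by
    by_contra hinf
    obtain ⟨T, hT, hTc⟩ := Set.Infinite.exists_subset_card_eq hinf (n + 2)
    exact hnoT T hT hTc
  have hZcard : hZfin.toFinset.card ≤ n + 1 := by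
    by_contra hcard
    push_neg at hcard
    obtain ⟨T, hT, hTc⟩ := Finset.exists_subset_card_eq hcard
    exact hnoT T (fun x hx => hZfin.mem_toFinset.1 (hT hx)) hTc
  -- enumerate the zero set
  set l : List ℂ := hZfin.toFinset.toList with hl
  have hlen : l.length ≤ n + 1 := by
    rw [hl, Finset.length_toList]; exact hZcard
  set z : Fin (n + 1) → ℂ := fun i => l.getD i z₀ with hzdef
  have hzmem : ∀ i, z i ∈ Z := by
    intro i
    show l.getD (i : ℕ) z₀ ∈ Z
    have hlZ : ∀ x, x ∈ l → x ∈ Z := by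
      intro x hx
      rw [hl, Finset.mem_toList] at hx
      exact hZfin.mem_toFinset.1 hx
    by_cases h : (i : ℕ) < l.length
    · refine hlZ _ ?_
      rw [List.getD_eq_getElem l z₀ h]
      exact List.getElem_mem h
    · exact Set.mem_of_eq_of_mem (List.getD_eq_default l z₀ (le_of_not_gt h)) hz₀Z
  refine ⟨z, fun i => ⟨(hzmem i).1, (hgzero (z i)).1 (hzmem i).2, ?_⟩, ?_⟩
  · -- proximity to a root of Δ
    have hziS : z i ∈ closedBall (0:ℂ) S :=
      mem_closedBall_zero_iff.2 (le_trans (hzmem i).1 hRS)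
    have h1 := hgP (z i) hziS
    have h2 : ‖P.eval (z i)‖ < m₁ := by
      have h3 : ‖P.eval (z i)‖ = ‖g (z i) - P.eval (z i)‖ := by
        rw [(hzmem i).2, zero_sub, norm_neg]
      rw [h3]
      linarith
    obtain ⟨w, hwroot, hwdist⟩ := hm₁b (z i) (hzmem i).1 h2
    exact ⟨w, by rw [← hPeval]; exact hwroot, hwdist⟩
  · -- coverage of all zeros
    intro w hwR hwzero
    have hwZ : w ∈ Z := ⟨hwR, (hgzero w).2 hwzero⟩
    have hwl : w ∈ l := by
      rw [hl, Finset.mem_toList]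
      exact hZfin.mem_toFinset.2 hwZ
    obtain ⟨j, hj, hjw⟩ := List.mem_iff_getElem.1 hwl
    have hjn : j < n + 1 := lt_of_lt_of_le hj hlen
    refine ⟨⟨j, hjn⟩, ?_⟩
    show l.getD ((⟨j, hjn⟩ : Fin (n + 1)) : ℕ) z₀ = w
    exact (List.getD_eq_getElem l z₀ (by simpa using hj)).trans (by simpa using hjw)
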